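/- Let d ≥ 1 and let r, ρ : Fin d → ℝ satisfy r(i) > 0 and ρ(i) > 1 for all i. Assume: (distinctness) for all i ≠ j and all n, m ∈ ℕ, r(i)·ρ(i)^n ≠ r(j)·ρ(j)^m; and (interleaving) for all i, j ∈ Fin d and all n ∈ ℕ there exists m ∈ ℕ with r(i)·ρ(i)^n ≤ r(j)·ρ(j)^m < ρ(j)·(r(i)·ρ(i)^n). Let S := {x ∈ ℝ : ∃ i n, x = r(i)·ρ(i)^n}, let t : ℕ → ℝ be a strictly increasing function whose range is S, and let w : ℕ → Fin d be such that for every k ∈ ℕ there exists n ∈ ℕ with t(k) = r(w(k))·ρ(w(k))^n. Then w is uniformly recurrent: for every ℓ ∈ ℕ there exists R ∈ ℕ such that for all p, q ∈ ℕ there exists p' with q ≤ p', p' + ℓ ≤ q + R, and w(p' + j) = w(p + j) for all j < ℓ. -/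

import Mathlib

open Finset

lemma abs_sub_lt_one_of_floor_eq (x y : ℝ) (h : ⌊x⌋ = ⌊y⌋) : |x - y| < 1 := by
  have hx1 := Int.floor_le x
  have hx2 := Int.lt_floor_add_one x
  have hy1 := Int.floor_le y
  have hy2 := Int.lt_floor_add_one y
  rw [h] at hx1 hx2
  rw [abs_sub_lt_iff]
  constructor <;> linarith

open Classical in
lemma simult_approx (d : ℕ) (s : Fin d → ℝ) (hs : ∀ j, 0 < s j) (v : ℝ) (ε : ℝ) (hε : 0 < ε) :
    ∃ G : ℕ, ∀ N : ℕ, ∃ ν : ℕ, N ≤ ν ∧ ν ≤ N + G ∧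
      ∀ j, ∃ m : ℤ, |(ν : ℝ) * v - m * s j| ≤ ε := by
  set M : ℕ := (Finset.univ.sup fun j : Fin d => ⌈s j / ε⌉₊) + 1 with hM
  have hM0 : 0 < M := Nat.succ_pos _
  have hMs : ∀ j, s j ≤ ε * M := by
    intro j
    have h1 : s j / ε ≤ (⌈s j / ε⌉₊ : ℝ) := Nat.le_ceil _
    have h2 : (⌈s j / ε⌉₊ : ℕ) ≤ M := by have h := Finset.le_sup (f := fun j : Fin d => ⌈s j / ε⌉₊) (mem_univ j); rw [hM]; omega
    have h3 : s j / ε ≤ (M : ℝ) := h1.trans (by exact_mod_cast h2)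
    calc s j = (s j / ε) * ε := by field_simp
    _ ≤ M * ε := by nlinarith
    _ = ε * M := by ring
  have hbox : ∀ ν : ℕ, ∀ j, ⌊Int.fract ((ν : ℝ) * v / s j) * M⌋.toNat < M := by
    intro ν j
    have h1 : Int.fract ((ν : ℝ) * v / s j) * M < M := by
      have := Int.fract_lt_one ((ν : ℝ) * v / s j)
      have hMpos : (0:ℝ) < M := by exact_mod_cast hM0
      nlinarith
    have : ⌊Int.fract ((ν : ℝ) * v / s j) * M⌋ < (M : ℤ) := by
      exact Int.floor_lt.2 (by exact_mod_cast h1)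
    omega
  set box : ℕ → (Fin d → Fin M) := fun ν j => ⟨_, hbox ν j⟩ with hboxdef
  have hkey : ∀ ν ν' : ℕ, ν' ≤ ν → box ν = box ν' →
      ∀ j, ∃ m : ℤ, |((ν : ℝ) - ν') * v - m * s j| ≤ ε := by
    intro ν ν' hle hb j
    have hbj : ⌊Int.fract ((ν : ℝ) * v / s j) * M⌋ = ⌊Int.fract ((ν' : ℝ) * v / s j) * M⌋ := by
      have h0 := congrFun hb j
      have h1 : (0:ℤ) ≤ ⌊Int.fract ((ν : ℝ) * v / s j) * M⌋ :=
        Int.floor_nonneg.2 (mul_nonneg (Int.fract_nonneg _) (by positivity))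
      have h2 : (0:ℤ) ≤ ⌊Int.fract ((ν' : ℝ) * v / s j) * M⌋ :=
        Int.floor_nonneg.2 (mul_nonneg (Int.fract_nonneg _) (by positivity))
      have h3 := congrArg Fin.val h0
      simp only [hboxdef] at h3
      omega
    have hfr : |Int.fract ((ν : ℝ) * v / s j) - Int.fract ((ν' : ℝ) * v / s j)| < 1 / M := by
      have h4 : |Int.fract ((ν : ℝ) * v / s j) * M - Int.fract ((ν' : ℝ) * v / s j) * M| < 1 :=
        abs_sub_lt_one_of_floor_eq _ _ hbj
      have hMpos : (0:ℝ) < M := by exact_mod_cast hM0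
      rw [show Int.fract ((ν : ℝ) * v / s j) * M - Int.fract ((ν' : ℝ) * v / s j) * M
          = (Int.fract ((ν : ℝ) * v / s j) - Int.fract ((ν' : ℝ) * v / s j)) * M by ring,
        abs_mul, abs_of_pos hMpos] at h4
      rw [lt_div_iff₀ hMpos]
      linarith
    refine ⟨⌊(ν : ℝ) * v / s j⌋ - ⌊(ν' : ℝ) * v / s j⌋, ?_⟩
    have hsj := hs j
    have e1 : (ν : ℝ) * v = (⌊(ν : ℝ) * v / s j⌋ + Int.fract ((ν : ℝ) * v / s j)) * s j := by
      rw [Int.floor_add_fract]; field_simp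
    have e2 : (ν' : ℝ) * v = (⌊(ν' : ℝ) * v / s j⌋ + Int.fract ((ν' : ℝ) * v / s j)) * s j := by
      rw [Int.floor_add_fract]; field_simp
    have e3 : ((ν : ℝ) - ν') * v - ((⌊(ν : ℝ) * v / s j⌋ : ℝ) - ⌊(ν' : ℝ) * v / s j⌋) * s j
        = (Int.fract ((ν : ℝ) * v / s j) - Int.fract ((ν' : ℝ) * v / s j)) * s j := by
      nlinarith [e1, e2]
    push_cast
    rw [e3, abs_mul, abs_of_pos hsj]
    have := hfr.le
    have hMpos : (0:ℝ) < M := by exact_mod_cast hM0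
    calc |Int.fract ((ν : ℝ) * v / s j) - Int.fract ((ν' : ℝ) * v / s j)| * s j
        ≤ (1 / M) * s j := by nlinarith [abs_nonneg (Int.fract ((ν : ℝ) * v / s j) - Int.fract ((ν' : ℝ) * v / s j))]
      _ ≤ ε := by rw [div_mul_eq_mul_div, one_mul, div_le_iff₀ hMpos]; linarith [hMs j]
  -- the net
  set W : (Fin d → Fin M) → ℕ := fun b => if h : ∃ ν, box ν = b then h.choose else 0 with hW
  refine ⟨Finset.univ.sup W, fun N => ?_⟩
  set G := Finset.univ.sup W with hG
  have hb : ∃ ν, box ν = box (N + G) := ⟨N + G, rfl⟩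
  have hWb : box (W (box (N + G))) = box (N + G) := by
    simp only [hW, dif_pos hb]; exact hb.choose_spec
  have hWle : W (box (N + G)) ≤ G := Finset.le_sup (mem_univ _)
  refine ⟨N + G - W (box (N + G)), by omega, by omega, fun j => ?_⟩
  obtain ⟨m, hm⟩ := hkey (N + G) (W (box (N + G))) (by omega) hWb.symm j
  refine ⟨m, ?_⟩
  have : ((N + G - W (box (N + G)) : ℕ) : ℝ) = ((N + G : ℕ) : ℝ) - (W (box (N + G)) : ℕ) := by
    have := hWle; push_cast [Nat.cast_sub (by omega : W (box (N+G)) ≤ N + G)]; ring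
  rw [this]
  exact_mod_cast hm

section aux2
variable {d : ℕ} {r ρ : Fin d → ℝ} {t : ℕ → ℝ} {w : ℕ → Fin d}

lemma geo_strictMono {i : Fin d} (hri : 0 < r i) (hρi : 1 < ρ i) :
    StrictMono (fun n : ℕ => r i * ρ i ^ n) := fun a b hab => by
  have := pow_lt_pow_right₀ hρi hab
  exact mul_lt_mul_of_pos_left this hri

lemma mem_t (hrange : Set.range t = {x : ℝ | ∃ i n, x = r i * ρ i ^ n}) (i : Fin d) (n : ℕ) :
    ∃ κ, t κ = r i * ρ i ^ n := by
  have : r i * ρ i ^ n ∈ Set.range t := by rw [hrange]; exact ⟨i, n, rfl⟩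
  exact this

lemma t_pos (hr : ∀ i, 0 < r i) (hρ : ∀ i, 1 < ρ i)
    (hrange : Set.range t = {x : ℝ | ∃ i n, x = r i * ρ i ^ n}) (κ : ℕ) : 0 < t κ := by
  have h : t κ ∈ Set.range t := Set.mem_range_self κ
  rw [hrange] at h
  obtain ⟨i, n, hin⟩ := h
  rw [hin]
  have := hr i; have := (hρ i)
  positivity

lemma t_succ_le (ht : StrictMono t)
    (hrange : Set.range t = {x : ℝ | ∃ i n, x = r i * ρ i ^ n})
    {κ : ℕ} {x : ℝ} (hx : ∃ i n, x = r i * ρ i ^ n) (hlt : t κ < x) : t (κ + 1) ≤ x := by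
  have : x ∈ Set.range t := by rw [hrange]; exact hx
  obtain ⟨κ', hκ'⟩ := this
  have : κ < κ' := ht.lt_iff_lt.1 (by rw [hκ']; exact hlt)
  rw [← hκ']
  exact ht.monotone (by omega)

lemma w_eq_of (hr : ∀ i, 0 < r i) (hρ : ∀ i, 1 < ρ i)
    (hdistinct : ∀ i j, i ≠ j → ∀ n m : ℕ, r i * ρ i ^ n ≠ r j * ρ j ^ m)
    (hw : ∀ k : ℕ, ∃ n : ℕ, t k = r (w k) * ρ (w k) ^ n)
    {κ : ℕ} {i : Fin d} {n : ℕ} (h : t κ = r i * ρ i ^ n) : w κ = i := by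
  by_contra hne
  obtain ⟨n', hn'⟩ := hw κ
  exact hdistinct (w κ) i hne n' n (by rw [← hn', h])

lemma geo_inj {i : Fin d} (hri : 0 < r i) (hρi : 1 < ρ i) {a b : ℕ}
    (h : r i * ρ i ^ a = r i * ρ i ^ b) : a = b :=
  (geo_strictMono hri hρi).injective h

lemma growth (hd : 1 ≤ d) (hr : ∀ i, 0 < r i) (hρ : ∀ i, 1 < ρ i)
    (ht : StrictMono t)
    (hrange : Set.range t = {x : ℝ | ∃ i n, x = r i * ρ i ^ n})
    (hw : ∀ k : ℕ, ∃ n : ℕ, t k = r (w k) * ρ (w k) ^ n)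
    (ρmin : ℝ) (hρm : ∀ i, ρmin ≤ ρ i) (hρm0 : 0 ≤ ρmin) :
    ∀ m M : ℕ, ρmin ^ M * t m ≤ t (m + d * M) := by
  have hstep : ∀ m : ℕ, ρmin * t m ≤ t (m + d) := by
    intro m
    have hcard : (Finset.univ : Finset (Fin d)).card <
        ((Finset.range (d + 1)).image (fun i => m + i)).card := by
      rw [Finset.card_image_of_injective _ (fun a b h => by omega)]
      simp
    obtain ⟨a, ha, b, hb, hab, hwab⟩ :=
      Finset.exists_ne_map_eq_of_card_lt_of_maps_to hcard
        (fun x _ => Finset.mem_univ (w x))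
    simp only [Finset.mem_image, Finset.mem_range] at ha hb
    obtain ⟨ia, hia, rfl⟩ := ha
    obtain ⟨ib, hib, rfl⟩ := hb
    have key : ∀ ia ib : ℕ, ib < d + 1 → ia < ib → w (m + ia) = w (m + ib) →
        ρmin * t m ≤ t (m + d) := by
      intro ia ib hib hlt' hc
      have hlt : m + ia < m + ib := by omega
      obtain ⟨n1, h1⟩ := hw (m + ia)
      obtain ⟨n2, h2⟩ := hw (m + ib)
      rw [hc] at h1
      set c := w (m + ib)
      have hv : t (m + ia) < t (m + ib) := ht hlt
      have hn : n1 < n2 := by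
        by_contra hcon
        have := (geo_strictMono (hr c) (hρ c)).monotone (not_lt.1 hcon)
        rw [← h1, ← h2] at this; linarith
      have h3 : ρ c * t (m + ia) ≤ t (m + ib) := by
        rw [h1, h2]
        have he : ρ c * (r c * ρ c ^ n1) = r c * ρ c ^ (n1 + 1) := by ring
        rw [he]
        exact ((geo_strictMono (hr c) (hρ c)).monotone (by omega : n1 + 1 ≤ n2))
      have h4 : t m ≤ t (m + ia) := ht.monotone (by omega)
      have h5 : t (m + ib) ≤ t (m + d) := ht.monotone (by omega)
      have htm := t_pos hr hρ hrange m
      have htma := t_pos hr hρ hrange (m + ia)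
      nlinarith [hρm c]
    rcases lt_or_gt_of_ne (show ia ≠ ib by intro h; exact hab (by rw [h])) with h | h
    · exact key ia ib hib h hwab
    · exact key ib ia hia h hwab.symm
  intro m M
  induction M with
  | zero => simpa using le_refl (t m)
  | succ M ih =>
    have htp := t_pos hr hρ hrange (m + d * M)
    have hstep' := hstep (m + d * M)
    have hρM : 0 ≤ ρmin ^ M := pow_nonneg hρm0 M
    calc ρmin ^ (M + 1) * t m = ρmin * (ρmin ^ M * t m) := by ring
      _ ≤ ρmin * t (m + d * M) := by nlinarith
      _ ≤ t (m + d * (M + 1)) := by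
          have : m + d * M + d = m + d * (M + 1) := by ring
          rw [← this]; exact hstep (m + d * M)
end aux2


section mainlem
variable {d : ℕ} {r ρ : Fin d → ℝ} {t : ℕ → ℝ} {w : ℕ → Fin d}

set_option maxHeartbeats 1000000 in
lemma order_main
    (hd : 1 ≤ d)
    (hr : ∀ i, 0 < r i) (hρ : ∀ i, 1 < ρ i)
    (hdistinct : ∀ i j, i ≠ j → ∀ n m : ℕ, r i * ρ i ^ n ≠ r j * ρ j ^ m)
    (hinter : ∀ i j : Fin d, ∀ n : ℕ, ∃ m : ℕ,
      r i * ρ i ^ n ≤ r j * ρ j ^ m ∧ r j * ρ j ^ m < ρ j * (r i * ρ i ^ n))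
    (ht : StrictMono t)
    (hrange : Set.range t = {x : ℝ | ∃ (i : Fin d) (n : ℕ), x = r i * ρ i ^ n})
    (hw : ∀ k : ℕ, ∃ n : ℕ, t k = r (w k) * ρ (w k) ^ n)
    (p ℓ : ℕ) :
    ∃ R : ℕ, ∀ q : ℕ, ∃ p' : ℕ,
      q ≤ p' ∧ p' + ℓ ≤ q + R ∧ ∀ j < ℓ, w (p' + j) = w (p + j) := by
  classical
  have hFin : Nonempty (Fin d) := ⟨⟨0, hd⟩⟩
  have huniv : (Finset.univ : Finset (Fin d)).Nonempty := univ_nonempty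
  set a : Fin d → ℝ := fun j => Real.log (r j) with ha
  set s : Fin d → ℝ := fun j => Real.log (ρ j) with hsdef
  have hs : ∀ j, 0 < s j := fun j => Real.log_pos (hρ j)
  have hlog : ∀ (i : Fin d) (n : ℕ), Real.log (r i * ρ i ^ n) = a i + n * s i := by
    intro i n
    have h1 : (0:ℝ) < ρ i := lt_trans one_pos (hρ i)
    rw [Real.log_mul (ne_of_gt (hr i)) (pow_ne_zero _ (ne_of_gt h1)), Real.log_pow]
  have htpos : ∀ κ, 0 < t κ := t_pos hr hρ hrange
  have hloglt : ∀ κ κ', (Real.log (t κ) < Real.log (t κ') ↔ t κ < t κ') := fun κ κ' =>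
    Real.log_lt_log_iff (htpos κ) (htpos κ')
  set i0 := w p with hi0
  obtain ⟨n0, hn0⟩ := hw p
  -- the constants
  have hne : (Finset.range (ℓ+2)).Nonempty := ⟨0, by simp⟩
  set γ1 := (Finset.range (ℓ+2)).inf' hne
      (fun i => Real.log (t (p - 1 + i + 1)) - Real.log (t (p - 1 + i))) with hγ1
  set γ2 := Finset.univ.inf' huniv s with hγ2
  set γ3 := Finset.univ.inf' huniv (fun j => Real.log (t 0) + s j - a j) with hγ3
  set γ := min γ1 (min γ2 γ3) with hγ
  have hγ1pos : 0 < γ1 := by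
    rw [hγ1, Finset.lt_inf'_iff]
    intro i _
    have h2 := ht (Nat.lt_succ_self (p - 1 + i))
    have := Real.log_lt_log (htpos (p - 1 + i)) h2
    linarith
  have hγ2pos : 0 < γ2 := by
    rw [hγ2, Finset.lt_inf'_iff]
    intro j _
    exact hs j
  have hγ3pos : 0 < γ3 := by
    rw [hγ3, Finset.lt_inf'_iff]
    intro j _
    -- t 0 ∈ S, say = r i1 * ρ i1 ^ n1 ≥ r i1, and r j < ρ j * r i1
    have h0 : t 0 ∈ Set.range t := Set.mem_range_self 0
    rw [hrange] at h0
    obtain ⟨i1, n1, h1⟩ := h0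
    have h2 : r i1 ≤ t 0 := by
      rw [h1]
      have h3 : (1:ℝ) ≤ ρ i1 ^ n1 := one_le_pow₀ (le_of_lt (hρ i1))
      nlinarith [hr i1]
    have h4 : r j < ρ j * r i1 := by
      obtain ⟨mm, hm1, hm2⟩ := hinter i1 j 0
      have h5 : r j ≤ r j * ρ j ^ mm := by
        have : (1:ℝ) ≤ ρ j ^ mm := one_le_pow₀ (le_of_lt (hρ j))
        nlinarith [hr j]
      simp only [pow_zero, mul_one] at hm1 hm2
      linarith
    have h6 : r j < ρ j * t 0 := by nlinarith [lt_trans one_pos (hρ j)]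
    have h7 : Real.log (r j) < Real.log (ρ j * t 0) :=
      Real.log_lt_log (hr j) h6
    rw [Real.log_mul (ne_of_gt (lt_trans one_pos (hρ j))) (ne_of_gt (htpos 0))] at h7
    simp only [ha, hsdef]
    linarith
  have hγpos : 0 < γ := lt_min hγ1pos (lt_min hγ2pos hγ3pos)
  set ε := γ / 4 with hε
  have hεpos : 0 < ε := by positivity
  have gapLB : ∀ m : ℕ, p - 1 ≤ m → m ≤ p + ℓ →
      γ ≤ Real.log (t (m+1)) - Real.log (t m) := by
    intro m h1 h2
    have hmem : m - (p - 1) ∈ Finset.range (ℓ + 2) := by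
      simp only [Finset.mem_range]; omega
    have h3 := Finset.inf'_le
      (f := fun i => Real.log (t (p - 1 + i + 1)) - Real.log (t (p - 1 + i))) hmem
    have he : p - 1 + (m - (p - 1)) = m := by omega
    rw [he] at h3
    calc γ ≤ γ1 := min_le_left _ _
      _ ≤ _ := by rw [hγ1]; exact h3
  have hγs : ∀ j, γ ≤ s j := by
    intro j
    calc γ ≤ min γ2 γ3 := min_le_right _ _
      _ ≤ γ2 := min_le_left _ _
      _ ≤ s j := by rw [hγ2]; exact Finset.inf'_le _ (mem_univ j)
  have hγ3' : ∀ j, γ ≤ Real.log (t 0) + s j - a j := by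
    intro j
    calc γ ≤ min γ2 γ3 := min_le_right _ _
      _ ≤ γ3 := min_le_right _ _
      _ ≤ _ := by rw [hγ3]; exact Finset.inf'_le _ (mem_univ j)
  -- K function
  have hK : ∀ ν : ℕ, ∃ κ, t κ = r i0 * ρ i0 ^ (n0 + ν) := fun ν => mem_t hrange i0 (n0 + ν)
  set K : ℕ → ℕ := fun ν => (hK ν).choose with hKdef
  have hKt : ∀ ν, t (K ν) = r i0 * ρ i0 ^ (n0 + ν) := fun ν => (hK ν).choose_spec
  have hK0 : K 0 = p := by
    apply ht.injective
    rw [hKt 0, Nat.add_zero, ← hn0]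
  have hKmono : StrictMono K := by
    intro x y hxy
    have h1 : t (K x) < t (K y) := by
      rw [hKt, hKt]
      exact geo_strictMono (hr i0) (hρ i0) (by omega)
    exact ht.lt_iff_lt.1 h1
  have hKge : ∀ ν, p + ν ≤ K ν := by
    intro ν
    have h2 : ∀ b, K 0 + b ≤ K b := by
      intro b; induction b with
      | zero => omega
      | succ b ih => have := hKmono (show b < b + 1 by omega); omega
    have := h2 ν
    omega
  -- step bound
  set ρmin := Finset.univ.inf' huniv ρ with hρmin
  have hρm : ∀ i, ρmin ≤ ρ i := fun i => Finset.inf'_le _ (mem_univ i)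
  have hρm1 : 1 < ρmin := by
    rw [hρmin, Finset.lt_inf'_iff]; intro j _; exact hρ j
  obtain ⟨M', hM'⟩ : ∃ M', ρ i0 < ρmin ^ M' := pow_unbounded_of_one_lt _ hρm1
  set D := d * M' with hD
  have hKstep : ∀ ν, K (ν+1) ≤ K ν + D := by
    intro ν
    have h1 : t (K (ν+1)) = ρ i0 * t (K ν) := by
      rw [hKt, hKt]
      have he : n0 + (ν + 1) = (n0 + ν) + 1 := by omega
      rw [he, pow_succ]; ring
    have h2 : ρmin ^ M' * t (K ν) ≤ t (K ν + D) :=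
      growth hd hr hρ ht hrange hw ρmin hρm (by linarith) (K ν) M'
    have h3 : t (K (ν+1)) < t (K ν + D) := by
      have := htpos (K ν)
      nlinarith
    have := ht.lt_iff_lt.1 h3
    omega
  have hKadd : ∀ ν b, K (ν + b) ≤ K ν + b * D := by
    intro ν b
    induction b with
    | zero => simp
    | succ b ih =>
      have h1 : ν + (b + 1) = (ν + b) + 1 := by omega
      rw [h1]
      have h2 := hKstep (ν + b)
      have h3 : (b+1) * D = b * D + D := by ring
      omega
  -- recurrence set
  obtain ⟨G, hG⟩ := simult_approx d s hs (s i0) ε hεpos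
  -- THE WINDOW CLAIM
  have window : ∀ ν : ℕ, 1 ≤ ν → (∀ j, ∃ mzz : ℤ, |(ν:ℝ) * s i0 - mzz * s j| ≤ ε) →
      ∀ i, i ≤ ℓ → w (K ν + i) = w (p + i) := by
    intro ν hν1 happ
    choose mz hmz using happ
    have hsi0γ : γ ≤ (ν:ℝ) * s i0 := by
      have h1 : (1:ℝ) ≤ (ν:ℝ) := by exact_mod_cast hν1
      have := hγs i0
      nlinarith [hs i0]
    have hmzpos : ∀ j, 0 < mz j := by
      intro j
      have h1 := hmz j
      have h2 : (mz j : ℝ) * s j ≥ (ν:ℝ) * s i0 - ε := by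
        have := abs_le.1 h1; linarith [this.2]
      have h3 : (0:ℝ) < (mz j : ℝ) * s j := by
        have : ε < γ := by rw [hε]; linarith
        linarith
      by_contra hcon
      push_neg at hcon
      have : (mz j : ℝ) ≤ 0 := by exact_mod_cast hcon
      nlinarith [hs j]
    set m : Fin d → ℕ := fun j => (mz j).toNat with hmdef
    have hmcast : ∀ j, ((m j : ℕ) : ℝ) = (mz j : ℝ) := by
      intro j
      have h1 := Int.toNat_of_nonneg (le_of_lt (hmzpos j))
      simp only [hmdef]
      exact_mod_cast congrArg (Int.cast : ℤ → ℝ) h1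
    have hm : ∀ j, |(ν:ℝ) * s i0 - (m j : ℝ) * s j| ≤ ε := by
      intro j; rw [hmcast j]; exact hmz j
    have hmi0 : m i0 = ν := by
      have h1 := hm i0
      have h2 : |((ν:ℝ) - (m i0 : ℝ))| * s i0 ≤ ε := by
        rw [← abs_of_pos (hs i0), ← abs_mul]
        rw [sub_mul]; exact h1
      have h3 : |((ν:ℝ) - (m i0:ℝ))| < 1 := by
        by_contra hcon
        push_neg at hcon
        have h4 := hγs i0
        have h5 : ε < s i0 := by rw [hε]; linarith
        nlinarith [hs i0]
      have h5 : ((|(ν:ℤ) - (m i0:ℤ)| : ℤ) : ℝ) < 1 := by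
        rw [Int.cast_abs]; push_cast; exact h3
      have h6 : |(ν:ℤ) - (m i0 : ℤ)| < 1 := by exact_mod_cast h5
      rw [abs_lt] at h6
      omega
    -- the induction
    have P : ∀ i, i ≤ ℓ → w (K ν + i) = w (p + i) ∧
        Real.log (t (K ν + i)) = Real.log (t (p + i)) + (m (w (p+i)) : ℝ) * s (w (p+i)) := by
      intro i
      induction i with
      | zero =>
        intro _
        constructor
        · rw [Nat.add_zero, Nat.add_zero, ← hi0]
          exact w_eq_of hr hρ hdistinct hw (hKt ν)
        · rw [Nat.add_zero, Nat.add_zero, ← hi0, hKt ν, hn0, hlog, hlog, ← hi0, hmi0]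
          push_cast; ring
      | succ i ih =>
        intro hi1
        obtain ⟨ihw, ihlog⟩ := ih (by omega)
        obtain ⟨nz, hnz⟩ := hw (p + i + 1)
        have hz'pos : 0 < r (w (p+i+1)) * ρ (w (p+i+1)) ^ (nz + m (w (p+i+1))) := by
          have h1 := hr (w (p+i+1)); have h2 := lt_trans one_pos (hρ (w (p+i+1)))
          positivity
        have hlogz' : Real.log (r (w (p+i+1)) * ρ (w (p+i+1)) ^ (nz + m (w (p+i+1))))
            = Real.log (t (p+i+1)) + (m (w (p+i+1)) : ℝ) * s (w (p+i+1)) := by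
          rw [hlog, hnz, hlog]; push_cast; ring
        have hgap : γ ≤ Real.log (t (p+i+1)) - Real.log (t (p+i)) :=
          gapLB (p + i) (by omega) (by omega)
        have hstep1 : Real.log (r (w (p+i+1)) * ρ (w (p+i+1)) ^ (nz + m (w (p+i+1))))
            - Real.log (t (K ν + i)) ≥ γ - 2*ε := by
          rw [hlogz', ihlog]
          have h1 := abs_le.1 (hm (w (p+i)))
          have h2 := abs_le.1 (hm (w (p+i+1)))
          linarith [h1.1, h1.2, h2.1, h2.2]
        have h2εγ : 2*ε < γ := by rw [hε]; linarith
        have hylt : t (K ν + i) < r (w (p+i+1)) * ρ (w (p+i+1)) ^ (nz + m (w (p+i+1))) := by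
          have h1 : Real.log (t (K ν + i))
              < Real.log (r (w (p+i+1)) * ρ (w (p+i+1)) ^ (nz + m (w (p+i+1)))) := by
            linarith
          exact (Real.log_lt_log_iff (htpos _) hz'pos).1 h1
        have hempty : ∀ κ₂ : ℕ, ¬ (t (K ν + i) < t κ₂ ∧
            t κ₂ < r (w (p+i+1)) * ρ (w (p+i+1)) ^ (nz + m (w (p+i+1)))) := by
          rintro κ₂ ⟨hu1, hu2⟩
          obtain ⟨mu, hmu⟩ := hw κ₂
          have hb1 : Real.log (t κ₂) - (m (w κ₂) : ℝ) * s (w κ₂)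
              > Real.log (t (p+i)) - 2*ε := by
            have h1 : Real.log (t (K ν + i)) < Real.log (t κ₂) :=
              Real.log_lt_log (htpos _) hu1
            rw [ihlog] at h1
            have h2 := abs_le.1 (hm (w (p+i)))
            have h3 := abs_le.1 (hm (w κ₂))
            linarith [h2.1, h2.2, h3.1, h3.2]
          have hb2 : Real.log (t κ₂) - (m (w κ₂) : ℝ) * s (w κ₂)
              < Real.log (t (p+i+1)) + 2*ε := by
            have h1 : Real.log (t κ₂)
                < Real.log (r (w (p+i+1)) * ρ (w (p+i+1)) ^ (nz + m (w (p+i+1)))) :=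
              Real.log_lt_log (htpos _) hu2
            rw [hlogz'] at h1
            have h2 := abs_le.1 (hm (w (p+i+1)))
            have h3 := abs_le.1 (hm (w κ₂))
            linarith [h2.1, h2.2, h3.1, h3.2]
          by_cases hcase : mu < m (w κ₂)
          · have h1 : Real.log (t κ₂) = a (w κ₂) + (mu:ℝ) * s (w κ₂) := by
              rw [hmu, hlog]
            have h3 : (mu:ℝ) - (m (w κ₂):ℝ) ≤ -1 := by
              have : (mu:ℝ) + 1 ≤ (m (w κ₂) : ℝ) := by exact_mod_cast hcase
              linarith
            have h4 : Real.log (t κ₂) - (m (w κ₂) : ℝ) * s (w κ₂) ≤ a (w κ₂) - s (w κ₂) := by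
              rw [h1]
              nlinarith [hs (w κ₂)]
            have h5 : a (w κ₂) - s (w κ₂) ≤ Real.log (t 0) - γ := by
              linarith [hγ3' (w κ₂)]
            have h6 : Real.log (t 0) ≤ Real.log (t (p+i)) :=
              Real.log_le_log (htpos 0) (ht.monotone (by omega))
            linarith
          · push_neg at hcase
            obtain ⟨κ₃, hκ₃⟩ := mem_t hrange (w κ₂) (mu - m (w κ₂))
            have hlogκ₃ : Real.log (t κ₃)
                = Real.log (t κ₂) - (m (w κ₂) : ℝ) * s (w κ₂) := by
              rw [hκ₃, hlog, hmu, hlog]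
              have h1 : ((mu - m (w κ₂) : ℕ) : ℝ) = (mu:ℝ) - (m (w κ₂):ℝ) := by
                push_cast [Nat.cast_sub hcase]; ring
              rw [h1]; ring
            have hup : κ₃ < p + i + 2 := by
              have hg2 : γ ≤ Real.log (t (p + i + 2)) - Real.log (t (p+i+1)) :=
                gapLB (p + i + 1) (by omega) (by omega)
              have h1 : Real.log (t κ₃) < Real.log (t (p + i + 2)) := by
                rw [hlogκ₃]; linarith
              exact ht.lt_iff_lt.1 ((hloglt κ₃ (p+i+2)).1 h1)
            have hdown : p + i ≤ κ₃ := by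
              by_cases hpi : p + i = 0
              · omega
              · have hg3 : γ ≤ Real.log (t (p+i)) - Real.log (t (p + i - 1)) := by
                  have h1 := gapLB (p + i - 1) (by omega) (by omega)
                  have he : p + i - 1 + 1 = p + i := by omega
                  rw [he] at h1
                  linarith
                have h1 : Real.log (t (p + i - 1)) < Real.log (t κ₃) := by
                  rw [hlogκ₃]; linarith
                have := ht.lt_iff_lt.1 ((hloglt (p+i-1) κ₃).1 h1)
                omega
            have hκ₃cases : κ₃ = p + i ∨ κ₃ = p + i + 1 := by omega
            rcases hκ₃cases with hcc | hcc
            · obtain ⟨ny, hny⟩ := hw (p + i)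
              have hj_eq : w κ₂ = w (p+i) := by
                by_contra hne
                exact hdistinct (w κ₂) (w (p+i)) hne (mu - m (w κ₂)) ny
                  (by rw [← hκ₃, hcc, hny])
              have h1 : Real.log (t κ₂) = Real.log (t (K ν + i)) := by
                have h7 : Real.log (t κ₃) = Real.log (t (p+i)) := by rw [hcc]
                rw [hlogκ₃] at h7
                rw [ihlog, ← hj_eq]
                linarith
              have h2 : t κ₂ = t (K ν + i) := by
                rw [← Real.exp_log (htpos κ₂), ← Real.exp_log (htpos (K ν + i)), h1]
              linarith
            · have hj_eq : w κ₂ = w (p+i+1) := by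
                by_contra hne
                exact hdistinct (w κ₂) (w (p+i+1)) hne (mu - m (w κ₂)) nz
                  (by rw [← hκ₃, hcc, hnz])
              have h8 : Real.log (t κ₂)
                  = Real.log (r (w (p+i+1)) * ρ (w (p+i+1)) ^ (nz + m (w (p+i+1)))) := by
                have h7 : Real.log (t κ₃) = Real.log (t (p+i+1)) := by rw [hcc]
                rw [hlogκ₃] at h7
                rw [hlogz', ← hj_eq]
                linarith
              have h2 : t κ₂ = r (w (p+i+1)) * ρ (w (p+i+1)) ^ (nz + m (w (p+i+1))) := by
                rw [← Real.exp_log (htpos κ₂), ← Real.exp_log hz'pos, h8]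
              linarith
        have hsucc : t (K ν + i + 1) = r (w (p+i+1)) * ρ (w (p+i+1)) ^ (nz + m (w (p+i+1))) := by
          have h1 : t (K ν + i + 1) ≤ r (w (p+i+1)) * ρ (w (p+i+1)) ^ (nz + m (w (p+i+1))) :=
            t_succ_le ht hrange ⟨w (p+i+1), nz + m (w (p+i+1)), rfl⟩ hylt
          have h2 : t (K ν + i) < t (K ν + i + 1) := ht (Nat.lt_succ_self _)
          rcases lt_or_eq_of_le h1 with h3 | h3
          · exact absurd ⟨h2, h3⟩ (hempty (K ν + i + 1))
          · exact h3
        have hassoc : K ν + (i+1) = (K ν + i) + 1 := by omega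
        have hassoc2 : p + (i+1) = (p + i) + 1 := by omega
        constructor
        · rw [hassoc, hassoc2]
          exact w_eq_of hr hρ hdistinct hw hsucc
        · rw [hassoc, hassoc2, hsucc, hlogz']
    exact fun i hi => (P i hi).1
  -- FINAL ASSEMBLY
  refine ⟨p + (G + 2) * D + ℓ, fun q => ?_⟩
  have hfind : ∃ ν, q ≤ K ν := ⟨q, by have := hKge q; omega⟩
  set N0 := Nat.find hfind with hN0
  have hN0spec : q ≤ K N0 := Nat.find_spec hfind
  set N := max N0 1 with hN
  obtain ⟨ν, hν1, hν2, happ⟩ := hG N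
  have hνge1 : 1 ≤ ν := le_trans (le_max_right _ _) hν1
  have hνgeN0 : N0 ≤ ν := le_trans (le_max_left _ _) hν1
  refine ⟨K ν, ?_, ?_, ?_⟩
  · exact le_trans hN0spec (hKmono.monotone hνgeN0)
  · have h1 : K N0 ≤ q + p + D := by
      rcases Nat.eq_zero_or_pos N0 with h | h
      · rw [h, hK0]; omega
      · have h2 : ¬ q ≤ K (N0 - 1) := Nat.find_min hfind (by omega)
        push_neg at h2
        have h3 : K N0 ≤ K (N0 - 1) + D := by
          have h4 := hKstep (N0 - 1)
          have he : N0 - 1 + 1 = N0 := by omega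
          rw [he] at h4; exact h4
        omega
    have h2 : K ν ≤ K N0 + (ν - N0) * D := by
      have h3 := hKadd N0 (ν - N0)
      have he : N0 + (ν - N0) = ν := by omega
      rw [he] at h3; exact h3
    have h3 : ν - N0 ≤ G + 1 := by omega
    have h4 : (ν - N0) * D ≤ (G + 1) * D := Nat.mul_le_mul_right _ h3
    have h5 : (G+2) * D = (G+1) * D + D := by ring
    omega
  · intro j hj
    exact window ν hνge1 happ j (by omega)

end mainlem


/-- The order word of finitely many geometric sequences `n ↦ r i * ρ i ^ n`
(normalized so that distinctness and interleaving hold) is uniformly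
recurrent. -/
theorem order_word_uniformly_recurrent
    (d : ℕ) (hd : 1 ≤ d) (r ρ : Fin d → ℝ)
    (hr : ∀ i, 0 < r i) (hρ : ∀ i, 1 < ρ i)
    (hdistinct : ∀ i j, i ≠ j → ∀ n m : ℕ, r i * ρ i ^ n ≠ r j * ρ j ^ m)
    (hinter : ∀ i j : Fin d, ∀ n : ℕ, ∃ m : ℕ,
      r i * ρ i ^ n ≤ r j * ρ j ^ m ∧ r j * ρ j ^ m < ρ j * (r i * ρ i ^ n))
    (t : ℕ → ℝ) (ht : StrictMono t)
    (hrange : Set.range t = {x : ℝ | ∃ (i : Fin d) (n : ℕ), x = r i * ρ i ^ n})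
    (w : ℕ → Fin d)
    (hw : ∀ k : ℕ, ∃ n : ℕ, t k = r (w k) * ρ (w k) ^ n) :
    ∀ ℓ : ℕ, ∃ R : ℕ, ∀ p q : ℕ, ∃ p' : ℕ,
      q ≤ p' ∧ p' + ℓ ≤ q + R ∧ ∀ j < ℓ, w (p' + j) = w (p + j) := by
  intro ℓ
  classical
  have main := fun p => order_main hd hr hρ hdistinct hinter ht hrange hw p ℓ
  choose Rf hRf using main
  set F : ℕ → (Fin ℓ → Fin d) := fun p j => w (p + j) with hF
  set rep : (Fin ℓ → Fin d) → ℕ :=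
    fun u => if h : ∃ p, F p = u then h.choose else 0 with hrep
  refine ⟨Finset.univ.sup (fun u : Fin ℓ → Fin d => Rf (rep u)), fun p q => ?_⟩
  have hex : ∃ p0, F p0 = F p := ⟨p, rfl⟩
  have hrepF : F (rep (F p)) = F p := by
    simp only [hrep, dif_pos hex]
    exact hex.choose_spec
  obtain ⟨p', h1, h2, h3⟩ := hRf (rep (F p)) q
  refine ⟨p', h1, ?_, ?_⟩
  · have h4 : Rf (rep (F p)) ≤ Finset.univ.sup (fun u : Fin ℓ → Fin d => Rf (rep u)) :=
      Finset.le_sup (f := fun u : Fin ℓ → Fin d => Rf (rep u)) (Finset.mem_univ (F p))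
    omega
  · intro j hj
    have h5 := congrFun hrepF (⟨j, hj⟩ : Fin ℓ)
    simp only [hF] at h5
    rw [h3 j hj]
    exact h5
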